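/- Let a > 0 and let p₁, p₂, p₃ be real numbers; set c = (p₁ + p₂ + p₃)/3 and p₀ = (4/9)(p₁² + p₂² + p₃²) - (1/9)(p₁ + p₂ + p₃)². On a probability space, let X be a real random variable with finite second moment and E[X] = c, and let A₁, A₂, A₃, C₁, C₂, C₃ be real random variables such that the seven random variables X, A₁, A₂, A₃, C₁, C₂, C₃ are mutually independent, each A_k is uniformly distributed on [-a, a], and each C_k is uniformly distributed on [0, 2]. Set Y = (1/3)·Σ_{k=1}^{3} (p_k + A_k·|C_k·p_k - X|). Then Y has finite second moment and Var(Y) = (a²/9)·(Var(X) + p₀). -/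

import Mathlib

open MeasureTheory ProbabilityTheory Set
set_option maxHeartbeats 2000000

lemma gwo_uniform_ae_mem {Ω : Type*} [MeasurableSpace Ω] {P : Measure Ω}
    {V : Ω → ℝ} {l u : ℝ} (hV : Measurable V)
    (h : Measure.map V P = (volume (Icc l u))⁻¹ • volume.restrict (Icc l u)) :
    ∀ᵐ ω ∂P, V ω ∈ Icc l u := by
  have h0 : P (V ⁻¹' (Icc l u)ᶜ) = 0 := by
    rw [← Measure.map_apply hV measurableSet_Icc.compl, h]
    simp [Measure.restrict_apply measurableSet_Icc.compl]
  exact ae_iff.2 (measure_mono_null (fun ω hω => hω) h0)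

lemma gwo_uniform_integral {Ω : Type*} [MeasurableSpace Ω] {P : Measure Ω}
    {V : Ω → ℝ} {l u : ℝ} (hlu : l < u) (hV : Measurable V)
    (h : Measure.map V P = (volume (Icc l u))⁻¹ • volume.restrict (Icc l u))
    (g : ℝ → ℝ) (hg : Measurable g) :
    ∫ ω, g (V ω) ∂P = (u - l)⁻¹ * ∫ x in l..u, g x := by
  have h1 : ∫ ω, g (V ω) ∂P = ∫ x, g x ∂(Measure.map V P) :=
    (integral_map hV.aemeasurable hg.aestronglyMeasurable).symm
  rw [h1, h, integral_smul_measure, Real.volume_Icc, ENNReal.toReal_inv,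
    ENNReal.toReal_ofReal (by linarith), intervalIntegral.integral_of_le hlu.le,
    ← integral_Icc_eq_integral_Ioc]
  simp [smul_eq_mul]

lemma gwo_uniform_mean {Ω : Type*} [MeasurableSpace Ω] {P : Measure Ω}
    {V : Ω → ℝ} {l u : ℝ} (hlu : l < u) (hV : Measurable V)
    (h : Measure.map V P = (volume (Icc l u))⁻¹ • volume.restrict (Icc l u)) :
    ∫ ω, V ω ∂P = (l + u) / 2 := by
  have := gwo_uniform_integral hlu hV h (fun x => x) measurable_id
  rw [integral_id] at this
  rw [this]
  have : u - l ≠ 0 := by linarith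
  field_simp
  ring

lemma gwo_uniform_sq {Ω : Type*} [MeasurableSpace Ω] {P : Measure Ω}
    {V : Ω → ℝ} {l u : ℝ} (hlu : l < u) (hV : Measurable V)
    (h : Measure.map V P = (volume (Icc l u))⁻¹ • volume.restrict (Icc l u)) :
    ∫ ω, (V ω) ^ 2 ∂P = (u ^ 2 + u * l + l ^ 2) / 3 := by
  have := gwo_uniform_integral hlu hV h (fun x => x ^ 2) (measurable_id.pow_const 2)
  rw [integral_pow] at this
  rw [this]
  have hne : u - l ≠ 0 := by linarith
  field_simp
  ring

theorem gwo_one_step_variance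
    {Ω : Type*} [MeasurableSpace Ω] (P : Measure Ω) [IsProbabilityMeasure P]
    (a : ℝ) (ha : 0 < a) (p₁ p₂ p₃ : ℝ)
    (c : ℝ) (hc : c = (p₁ + p₂ + p₃) / 3)
    (p₀ : ℝ)
    (hp₀ : p₀ = (4/9) * (p₁^2 + p₂^2 + p₃^2) - (1/9) * (p₁ + p₂ + p₃)^2)
    (X A₁ A₂ A₃ C₁ C₂ C₃ : Ω → ℝ)
    (hXm : Measurable X)
    (hA₁m : Measurable A₁) (hA₂m : Measurable A₂) (hA₃m : Measurable A₃)
    (hC₁m : Measurable C₁) (hC₂m : Measurable C₂) (hC₃m : Measurable C₃)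
    (hX2 : MemLp X 2 P) (hXmean : ∫ ω, X ω ∂P = c)
    (hA₁ : Measure.map A₁ P
      = (volume (Icc (-a) a))⁻¹ • volume.restrict (Icc (-a) a))
    (hA₂ : Measure.map A₂ P
      = (volume (Icc (-a) a))⁻¹ • volume.restrict (Icc (-a) a))
    (hA₃ : Measure.map A₃ P
      = (volume (Icc (-a) a))⁻¹ • volume.restrict (Icc (-a) a))
    (hC₁ : Measure.map C₁ P
      = (volume (Icc (0:ℝ) 2))⁻¹ • volume.restrict (Icc (0:ℝ) 2))
    (hC₂ : Measure.map C₂ P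
      = (volume (Icc (0:ℝ) 2))⁻¹ • volume.restrict (Icc (0:ℝ) 2))
    (hC₃ : Measure.map C₃ P
      = (volume (Icc (0:ℝ) 2))⁻¹ • volume.restrict (Icc (0:ℝ) 2))
    (hindep : iIndepFun (m := fun _ : Fin 7 => (inferInstance : MeasurableSpace ℝ))
      ![X, A₁, A₂, A₃, C₁, C₂, C₃] P) :
    MemLp (fun ω => (1/3 : ℝ) *
        ((p₁ + A₁ ω * |C₁ ω * p₁ - X ω|) + (p₂ + A₂ ω * |C₂ ω * p₂ - X ω|)
          + (p₃ + A₃ ω * |C₃ ω * p₃ - X ω|))) 2 P ∧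
    variance (fun ω => (1/3 : ℝ) *
        ((p₁ + A₁ ω * |C₁ ω * p₁ - X ω|) + (p₂ + A₂ ω * |C₂ ω * p₂ - X ω|)
          + (p₃ + A₃ ω * |C₃ ω * p₃ - X ω|))) P
      = (a^2 / 9) * (variance X P + p₀) := by
  classical
  have hf : ∀ i : Fin 7, Measurable (![X, A₁, A₂, A₃, C₁, C₂, C₃] i) := by
    intro i; fin_cases i <;> assumption
  have hal : -a < a := by linarith
  have h02 : (0:ℝ) < 2 := by norm_num
  -- the "distance" random variables
  set B₁ : Ω → ℝ := fun ω => |C₁ ω * p₁ - X ω| with hB₁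
  set B₂ : Ω → ℝ := fun ω => |C₂ ω * p₂ - X ω| with hB₂
  set B₃ : Ω → ℝ := fun ω => |C₃ ω * p₃ - X ω| with hB₃
  have hB₁m : Measurable B₁ := ((hC₁m.mul_const _).sub hXm).abs
  have hB₂m : Measurable B₂ := ((hC₂m.mul_const _).sub hXm).abs
  have hB₃m : Measurable B₃ := ((hC₃m.mul_const _).sub hXm).abs
  set Z₁ : Ω → ℝ := fun ω => A₁ ω * B₁ ω with hZ₁
  set Z₂ : Ω → ℝ := fun ω => A₂ ω * B₂ ω with hZ₂
  set Z₃ : Ω → ℝ := fun ω => A₃ ω * B₃ ω with hZ₃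
  have hZ₁m : Measurable Z₁ := hA₁m.mul hB₁m
  have hZ₂m : Measurable Z₂ := hA₂m.mul hB₂m
  have hZ₃m : Measurable Z₃ := hA₃m.mul hB₃m
  set W : Ω → ℝ := fun ω => Z₁ ω + Z₂ ω + Z₃ ω with hW
  -- a.e. bounds
  have haeA₁ : ∀ᵐ ω ∂P, A₁ ω ∈ Icc (-a) a := gwo_uniform_ae_mem hA₁m hA₁
  have haeA₂ : ∀ᵐ ω ∂P, A₂ ω ∈ Icc (-a) a := gwo_uniform_ae_mem hA₂m hA₂
  have haeA₃ : ∀ᵐ ω ∂P, A₃ ω ∈ Icc (-a) a := gwo_uniform_ae_mem hA₃m hA₃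
  have haeC₁ : ∀ᵐ ω ∂P, C₁ ω ∈ Icc (0:ℝ) 2 := gwo_uniform_ae_mem hC₁m hC₁
  have haeC₂ : ∀ᵐ ω ∂P, C₂ ω ∈ Icc (0:ℝ) 2 := gwo_uniform_ae_mem hC₂m hC₂
  have haeC₃ : ∀ᵐ ω ∂P, C₃ ω ∈ Icc (0:ℝ) 2 := gwo_uniform_ae_mem hC₃m hC₃
  -- moments of the uniform variables
  have hA₁mean : ∫ ω, A₁ ω ∂P = 0 := by
    have := gwo_uniform_mean hal hA₁m hA₁; rw [this]; ring
  have hA₂mean : ∫ ω, A₂ ω ∂P = 0 := by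
    have := gwo_uniform_mean hal hA₂m hA₂; rw [this]; ring
  have hA₃mean : ∫ ω, A₃ ω ∂P = 0 := by
    have := gwo_uniform_mean hal hA₃m hA₃; rw [this]; ring
  have hA₁sq : ∫ ω, (A₁ ω)^2 ∂P = a^2/3 := by
    have := gwo_uniform_sq hal hA₁m hA₁; rw [this]; ring
  have hA₂sq : ∫ ω, (A₂ ω)^2 ∂P = a^2/3 := by
    have := gwo_uniform_sq hal hA₂m hA₂; rw [this]; ring
  have hA₃sq : ∫ ω, (A₃ ω)^2 ∂P = a^2/3 := by
    have := gwo_uniform_sq hal hA₃m hA₃; rw [this]; ring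
  have hC₁mean : ∫ ω, C₁ ω ∂P = 1 := by
    have := gwo_uniform_mean h02 hC₁m hC₁; rw [this]; norm_num
  have hC₂mean : ∫ ω, C₂ ω ∂P = 1 := by
    have := gwo_uniform_mean h02 hC₂m hC₂; rw [this]; norm_num
  have hC₃mean : ∫ ω, C₃ ω ∂P = 1 := by
    have := gwo_uniform_sq h02 hC₃m hC₃;
    have h := gwo_uniform_mean h02 hC₃m hC₃; rw [h]; norm_num
  have hC₁sq : ∫ ω, (C₁ ω)^2 ∂P = 4/3 := by
    have := gwo_uniform_sq h02 hC₁m hC₁; rw [this]; norm_num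
  have hC₂sq : ∫ ω, (C₂ ω)^2 ∂P = 4/3 := by
    have := gwo_uniform_sq h02 hC₂m hC₂; rw [this]; norm_num
  have hC₃sq : ∫ ω, (C₃ ω)^2 ∂P = 4/3 := by
    have := gwo_uniform_sq h02 hC₃m hC₃; rw [this]; norm_num
  -- basic integrability of X
  have hXint : Integrable X P := hX2.integrable one_le_two
  have hXabs : MemLp (fun ω => |X ω|) 2 P := hX2.abs
  have hXabsint : Integrable (fun ω => |X ω|) P := hXabs.integrable one_le_two
  have hXsqint : Integrable (fun ω => X ω ^ 2) P := by
    simpa using hX2.integrable_sq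
  have hXsq : ∫ ω, X ω ^ 2 ∂P = variance X P + c ^ 2 := by
    have h := variance_eq_sub hX2
    simp only [Pi.pow_apply] at h
    rw [hXmean] at h
    linarith
  -- a.e. bounds on the Z's
  have hZbd₁ : ∀ᵐ ω ∂P, |Z₁ ω| ≤ a * (2 * |p₁| + |X ω|) := by
    filter_upwards [haeA₁, haeC₁] with ω hA hC
    have h1 : |A₁ ω| ≤ a := abs_le.2 ⟨hA.1, hA.2⟩
    have h2 : |B₁ ω| ≤ 2 * |p₁| + |X ω| := by
      rw [hB₁]; simp only [abs_abs]
      calc |C₁ ω * p₁ - X ω| ≤ |C₁ ω * p₁| + |X ω| := abs_sub _ _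
        _ ≤ 2 * |p₁| + |X ω| := by
            have : |C₁ ω * p₁| = |C₁ ω| * |p₁| := abs_mul _ _
            have hC2 : |C₁ ω| ≤ 2 := abs_le.2 ⟨by linarith [hC.1], hC.2⟩
            nlinarith [abs_nonneg p₁, abs_nonneg (C₁ ω)]
    calc |Z₁ ω| = |A₁ ω| * |B₁ ω| := by rw [hZ₁]; exact abs_mul _ _
      _ ≤ a * (2 * |p₁| + |X ω|) :=
          mul_le_mul h1 h2 (abs_nonneg _) ha.le
  have hZbd₂ : ∀ᵐ ω ∂P, |Z₂ ω| ≤ a * (2 * |p₂| + |X ω|) := by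
    filter_upwards [haeA₂, haeC₂] with ω hA hC
    have h1 : |A₂ ω| ≤ a := abs_le.2 ⟨hA.1, hA.2⟩
    have h2 : |B₂ ω| ≤ 2 * |p₂| + |X ω| := by
      rw [hB₂]; simp only [abs_abs]
      calc |C₂ ω * p₂ - X ω| ≤ |C₂ ω * p₂| + |X ω| := abs_sub _ _
        _ ≤ 2 * |p₂| + |X ω| := by
            have : |C₂ ω * p₂| = |C₂ ω| * |p₂| := abs_mul _ _
            have hC2 : |C₂ ω| ≤ 2 := abs_le.2 ⟨by linarith [hC.1], hC.2⟩
            nlinarith [abs_nonneg p₂, abs_nonneg (C₂ ω)]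
    calc |Z₂ ω| = |A₂ ω| * |B₂ ω| := by rw [hZ₂]; exact abs_mul _ _
      _ ≤ a * (2 * |p₂| + |X ω|) :=
          mul_le_mul h1 h2 (abs_nonneg _) ha.le
  have hZbd₃ : ∀ᵐ ω ∂P, |Z₃ ω| ≤ a * (2 * |p₃| + |X ω|) := by
    filter_upwards [haeA₃, haeC₃] with ω hA hC
    have h1 : |A₃ ω| ≤ a := abs_le.2 ⟨hA.1, hA.2⟩
    have h2 : |B₃ ω| ≤ 2 * |p₃| + |X ω| := by
      rw [hB₃]; simp only [abs_abs]
      calc |C₃ ω * p₃ - X ω| ≤ |C₃ ω * p₃| + |X ω| := abs_sub _ _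
        _ ≤ 2 * |p₃| + |X ω| := by
            have : |C₃ ω * p₃| = |C₃ ω| * |p₃| := abs_mul _ _
            have hC2 : |C₃ ω| ≤ 2 := abs_le.2 ⟨by linarith [hC.1], hC.2⟩
            nlinarith [abs_nonneg p₃, abs_nonneg (C₃ ω)]
    calc |Z₃ ω| = |A₃ ω| * |B₃ ω| := by rw [hZ₃]; exact abs_mul _ _
      _ ≤ a * (2 * |p₃| + |X ω|) :=
          mul_le_mul h1 h2 (abs_nonneg _) ha.le
  -- L² membership of the Z's
  have hbd₁mem : MemLp (fun ω => a * (2 * |p₁| + |X ω|)) 2 P :=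
    ((memLp_const (2 * |p₁|)).add hXabs).const_mul a
  have hbd₂mem : MemLp (fun ω => a * (2 * |p₂| + |X ω|)) 2 P :=
    ((memLp_const (2 * |p₂|)).add hXabs).const_mul a
  have hbd₃mem : MemLp (fun ω => a * (2 * |p₃| + |X ω|)) 2 P :=
    ((memLp_const (2 * |p₃|)).add hXabs).const_mul a
  have hZ₁mem : MemLp Z₁ 2 P := by
    refine hbd₁mem.mono' hZ₁m.aestronglyMeasurable ?_
    filter_upwards [hZbd₁] with ω h using by simpa [Real.norm_eq_abs] using h
  have hZ₂mem : MemLp Z₂ 2 P := by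
    refine hbd₂mem.mono' hZ₂m.aestronglyMeasurable ?_
    filter_upwards [hZbd₂] with ω h using by simpa [Real.norm_eq_abs] using h
  have hZ₃mem : MemLp Z₃ 2 P := by
    refine hbd₃mem.mono' hZ₃m.aestronglyMeasurable ?_
    filter_upwards [hZbd₃] with ω h using by simpa [Real.norm_eq_abs] using h
  have hZ₁int : Integrable Z₁ P := hZ₁mem.integrable one_le_two
  have hZ₂int : Integrable Z₂ P := hZ₂mem.integrable one_le_two
  have hZ₃int : Integrable Z₃ P := hZ₃mem.integrable one_le_two
  -- independence facts
  have hAB₁ : IndepFun A₁ B₁ P := by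
    have h := hindep.indepFun_prodMk hf 0 4 1 (by decide) (by decide)
    exact (h.comp (φ := fun q : ℝ × ℝ => |q.2 * p₁ - q.1|) (ψ := id)
      (((measurable_snd.mul_const _).sub measurable_fst).abs) measurable_id).symm
  have hAB₂ : IndepFun A₂ B₂ P := by
    have h := hindep.indepFun_prodMk hf 0 5 2 (by decide) (by decide)
    exact (h.comp (φ := fun q : ℝ × ℝ => |q.2 * p₂ - q.1|) (ψ := id)
      (((measurable_snd.mul_const _).sub measurable_fst).abs) measurable_id).symm
  have hAB₃ : IndepFun A₃ B₃ P := by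
    have h := hindep.indepFun_prodMk hf 0 6 3 (by decide) (by decide)
    exact (h.comp (φ := fun q : ℝ × ℝ => |q.2 * p₃ - q.1|) (ψ := id)
      (((measurable_snd.mul_const _).sub measurable_fst).abs) measurable_id).symm
  have hCX₁ : IndepFun C₁ X P := hindep.indepFun (show (4 : Fin 7) ≠ 0 by decide)
  have hCX₂ : IndepFun C₂ X P := hindep.indepFun (show (5 : Fin 7) ≠ 0 by decide)
  have hCX₃ : IndepFun C₃ X P := hindep.indepFun (show (6 : Fin 7) ≠ 0 by decide)
  have hcross₁₂ : IndepFun A₁ (fun ω => A₂ ω * (B₁ ω * B₂ ω)) P := by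
    have h := hindep.indepFun_finset {1} {0, 2, 4, 5} (by decide) hf
    have hφ : Measurable (fun v : (({1} : Finset (Fin 7)) → ℝ) =>
        v ⟨1, by decide⟩) := measurable_pi_apply _
    have hψ : Measurable (fun v : (({0, 2, 4, 5} : Finset (Fin 7)) → ℝ) =>
        v ⟨2, by decide⟩ * (|v ⟨4, by decide⟩ * p₁ - v ⟨0, by decide⟩| *
          |v ⟨5, by decide⟩ * p₂ - v ⟨0, by decide⟩|)) := by
      fun_prop
    exact h.comp hφ hψ
  have hcross₁₃ : IndepFun A₁ (fun ω => A₃ ω * (B₁ ω * B₃ ω)) P := by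
    have h := hindep.indepFun_finset {1} {0, 3, 4, 6} (by decide) hf
    have hφ : Measurable (fun v : (({1} : Finset (Fin 7)) → ℝ) =>
        v ⟨1, by decide⟩) := measurable_pi_apply _
    have hψ : Measurable (fun v : (({0, 3, 4, 6} : Finset (Fin 7)) → ℝ) =>
        v ⟨3, by decide⟩ * (|v ⟨4, by decide⟩ * p₁ - v ⟨0, by decide⟩| *
          |v ⟨6, by decide⟩ * p₃ - v ⟨0, by decide⟩|)) := by
      fun_prop
    exact h.comp hφ hψ
  have hcross₂₃ : IndepFun A₂ (fun ω => A₃ ω * (B₂ ω * B₃ ω)) P := by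
    have h := hindep.indepFun_finset {2} {0, 3, 5, 6} (by decide) hf
    have hφ : Measurable (fun v : (({2} : Finset (Fin 7)) → ℝ) =>
        v ⟨2, by decide⟩) := measurable_pi_apply _
    have hψ : Measurable (fun v : (({0, 3, 5, 6} : Finset (Fin 7)) → ℝ) =>
        v ⟨3, by decide⟩ * (|v ⟨5, by decide⟩ * p₂ - v ⟨0, by decide⟩| *
          |v ⟨6, by decide⟩ * p₃ - v ⟨0, by decide⟩|)) := by
      fun_prop
    exact h.comp hφ hψ
  -- mean of the Z's
  have hZ₁mean : ∫ ω, Z₁ ω ∂P = 0 := by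
    have h : ∫ ω, A₁ ω * B₁ ω ∂P = (∫ ω, A₁ ω ∂P) * ∫ ω, B₁ ω ∂P :=
      hAB₁.integral_fun_mul_eq_mul_integral hA₁m.aestronglyMeasurable hB₁m.aestronglyMeasurable
    have heq : Z₁ = fun ω => A₁ ω * B₁ ω := hZ₁
    rw [heq, h, hA₁mean, zero_mul]
  have hZ₂mean : ∫ ω, Z₂ ω ∂P = 0 := by
    have h : ∫ ω, A₂ ω * B₂ ω ∂P = (∫ ω, A₂ ω ∂P) * ∫ ω, B₂ ω ∂P :=
      hAB₂.integral_fun_mul_eq_mul_integral hA₂m.aestronglyMeasurable hB₂m.aestronglyMeasurable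
    rw [hZ₂, h, hA₂mean, zero_mul]
  have hZ₃mean : ∫ ω, Z₃ ω ∂P = 0 := by
    have h : ∫ ω, A₃ ω * B₃ ω ∂P = (∫ ω, A₃ ω ∂P) * ∫ ω, B₃ ω ∂P :=
      hAB₃.integral_fun_mul_eq_mul_integral hA₃m.aestronglyMeasurable hB₃m.aestronglyMeasurable
    rw [hZ₃, h, hA₃mean, zero_mul]
  -- integrability of C's and products C·X
  have hC₁int : Integrable C₁ P := by
    refine (integrable_const (2:ℝ)).mono' hC₁m.aestronglyMeasurable ?_
    filter_upwards [haeC₁] with ω h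
    rw [Real.norm_eq_abs]
    exact abs_le.2 ⟨by linarith [h.1], h.2⟩
  have hC₂int : Integrable C₂ P := by
    refine (integrable_const (2:ℝ)).mono' hC₂m.aestronglyMeasurable ?_
    filter_upwards [haeC₂] with ω h
    rw [Real.norm_eq_abs]
    exact abs_le.2 ⟨by linarith [h.1], h.2⟩
  have hC₃int : Integrable C₃ P := by
    refine (integrable_const (2:ℝ)).mono' hC₃m.aestronglyMeasurable ?_
    filter_upwards [haeC₃] with ω h
    rw [Real.norm_eq_abs]
    exact abs_le.2 ⟨by linarith [h.1], h.2⟩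
  have hC₁sqint : Integrable (fun ω => C₁ ω ^ 2) P := by
    refine (integrable_const (4:ℝ)).mono' (hC₁m.pow_const 2).aestronglyMeasurable ?_
    filter_upwards [haeC₁] with ω h
    rw [Real.norm_eq_abs, abs_of_nonneg (sq_nonneg _)]
    nlinarith [h.1, h.2]
  have hC₂sqint : Integrable (fun ω => C₂ ω ^ 2) P := by
    refine (integrable_const (4:ℝ)).mono' (hC₂m.pow_const 2).aestronglyMeasurable ?_
    filter_upwards [haeC₂] with ω h
    rw [Real.norm_eq_abs, abs_of_nonneg (sq_nonneg _)]
    nlinarith [h.1, h.2]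
  have hC₃sqint : Integrable (fun ω => C₃ ω ^ 2) P := by
    refine (integrable_const (4:ℝ)).mono' (hC₃m.pow_const 2).aestronglyMeasurable ?_
    filter_upwards [haeC₃] with ω h
    rw [Real.norm_eq_abs, abs_of_nonneg (sq_nonneg _)]
    nlinarith [h.1, h.2]
  have hCX₁int : Integrable (fun ω => C₁ ω * X ω) P := hCX₁.integrable_mul hC₁int hXint
  have hCX₂int : Integrable (fun ω => C₂ ω * X ω) P := hCX₂.integrable_mul hC₂int hXint
  have hCX₃int : Integrable (fun ω => C₃ ω * X ω) P := hCX₃.integrable_mul hC₃int hXint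
  have hCX₁val : ∫ ω, C₁ ω * X ω ∂P = c := by
    have h : ∫ ω, C₁ ω * X ω ∂P = (∫ ω, C₁ ω ∂P) * ∫ ω, X ω ∂P :=
      hCX₁.integral_fun_mul_eq_mul_integral hC₁m.aestronglyMeasurable hXm.aestronglyMeasurable
    rw [h, hC₁mean, hXmean, one_mul]
  have hCX₂val : ∫ ω, C₂ ω * X ω ∂P = c := by
    have h : ∫ ω, C₂ ω * X ω ∂P = (∫ ω, C₂ ω ∂P) * ∫ ω, X ω ∂P :=
      hCX₂.integral_fun_mul_eq_mul_integral hC₂m.aestronglyMeasurable hXm.aestronglyMeasurable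
    rw [h, hC₂mean, hXmean, one_mul]
  have hCX₃val : ∫ ω, C₃ ω * X ω ∂P = c := by
    have h : ∫ ω, C₃ ω * X ω ∂P = (∫ ω, C₃ ω ∂P) * ∫ ω, X ω ∂P :=
      hCX₃.integral_fun_mul_eq_mul_integral hC₃m.aestronglyMeasurable hXm.aestronglyMeasurable
    rw [h, hC₃mean, hXmean, one_mul]
  -- second moments of the B's
  have hB₁sq : ∫ ω, B₁ ω ^ 2 ∂P = 4/3*p₁^2 - 2*p₁*c + (variance X P + c^2) := by
    have heq : (fun ω => B₁ ω ^ 2)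
        = fun ω => p₁^2 * C₁ ω ^ 2 - 2*p₁*(C₁ ω * X ω) + X ω ^ 2 := by
      funext ω; rw [hB₁]; simp only; rw [sq_abs]; ring
    have ia : Integrable (fun ω => p₁^2 * C₁ ω ^ 2) P := hC₁sqint.const_mul _
    have ib : Integrable (fun ω => 2*p₁*(C₁ ω * X ω)) P := hCX₁int.const_mul _
    have iab : Integrable (fun ω => p₁^2 * C₁ ω ^ 2 - 2*p₁*(C₁ ω * X ω)) P := ia.sub ib
    rw [heq, integral_add iab hXsqint, integral_sub ia ib,
      integral_const_mul _ _, integral_const_mul _ _, hC₁sq, hCX₁val, hXsq]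
    ring
  have hB₂sq : ∫ ω, B₂ ω ^ 2 ∂P = 4/3*p₂^2 - 2*p₂*c + (variance X P + c^2) := by
    have heq : (fun ω => B₂ ω ^ 2)
        = fun ω => p₂^2 * C₂ ω ^ 2 - 2*p₂*(C₂ ω * X ω) + X ω ^ 2 := by
      funext ω; rw [hB₂]; simp only; rw [sq_abs]; ring
    have ia : Integrable (fun ω => p₂^2 * C₂ ω ^ 2) P := hC₂sqint.const_mul _
    have ib : Integrable (fun ω => 2*p₂*(C₂ ω * X ω)) P := hCX₂int.const_mul _
    have iab : Integrable (fun ω => p₂^2 * C₂ ω ^ 2 - 2*p₂*(C₂ ω * X ω)) P := ia.sub ib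
    rw [heq, integral_add iab hXsqint, integral_sub ia ib,
      integral_const_mul _ _, integral_const_mul _ _, hC₂sq, hCX₂val, hXsq]
    ring
  have hB₃sq : ∫ ω, B₃ ω ^ 2 ∂P = 4/3*p₃^2 - 2*p₃*c + (variance X P + c^2) := by
    have heq : (fun ω => B₃ ω ^ 2)
        = fun ω => p₃^2 * C₃ ω ^ 2 - 2*p₃*(C₃ ω * X ω) + X ω ^ 2 := by
      funext ω; rw [hB₃]; simp only; rw [sq_abs]; ring
    have ia : Integrable (fun ω => p₃^2 * C₃ ω ^ 2) P := hC₃sqint.const_mul _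
    have ib : Integrable (fun ω => 2*p₃*(C₃ ω * X ω)) P := hCX₃int.const_mul _
    have iab : Integrable (fun ω => p₃^2 * C₃ ω ^ 2 - 2*p₃*(C₃ ω * X ω)) P := ia.sub ib
    rw [heq, integral_add iab hXsqint, integral_sub ia ib,
      integral_const_mul _ _, integral_const_mul _ _, hC₃sq, hCX₃val, hXsq]
    ring
  -- second moments of the Z's
  have hZ₁sq : ∫ ω, Z₁ ω ^ 2 ∂P
      = a^2/3 * (4/3*p₁^2 - 2*p₁*c + (variance X P + c^2)) := by
    have hind : IndepFun (fun ω => A₁ ω ^ 2) (fun ω => B₁ ω ^ 2) P :=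
      hAB₁.comp (measurable_id.pow_const 2) (measurable_id.pow_const 2)
    have h : ∫ ω, A₁ ω ^ 2 * B₁ ω ^ 2 ∂P
        = (∫ ω, A₁ ω ^ 2 ∂P) * ∫ ω, B₁ ω ^ 2 ∂P :=
      hind.integral_fun_mul_eq_mul_integral (hA₁m.pow_const 2).aestronglyMeasurable
        (hB₁m.pow_const 2).aestronglyMeasurable
    have heq : (fun ω => Z₁ ω ^ 2) = fun ω => A₁ ω ^ 2 * B₁ ω ^ 2 := by
      funext ω; rw [hZ₁]; simp only; ring
    rw [heq, h, hA₁sq, hB₁sq]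
  have hZ₂sq : ∫ ω, Z₂ ω ^ 2 ∂P
      = a^2/3 * (4/3*p₂^2 - 2*p₂*c + (variance X P + c^2)) := by
    have hind : IndepFun (fun ω => A₂ ω ^ 2) (fun ω => B₂ ω ^ 2) P :=
      hAB₂.comp (measurable_id.pow_const 2) (measurable_id.pow_const 2)
    have h : ∫ ω, A₂ ω ^ 2 * B₂ ω ^ 2 ∂P
        = (∫ ω, A₂ ω ^ 2 ∂P) * ∫ ω, B₂ ω ^ 2 ∂P :=
      hind.integral_fun_mul_eq_mul_integral (hA₂m.pow_const 2).aestronglyMeasurable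
        (hB₂m.pow_const 2).aestronglyMeasurable
    have heq : (fun ω => Z₂ ω ^ 2) = fun ω => A₂ ω ^ 2 * B₂ ω ^ 2 := by
      funext ω; rw [hZ₂]; simp only; ring
    rw [heq, h, hA₂sq, hB₂sq]
  have hZ₃sq : ∫ ω, Z₃ ω ^ 2 ∂P
      = a^2/3 * (4/3*p₃^2 - 2*p₃*c + (variance X P + c^2)) := by
    have hind : IndepFun (fun ω => A₃ ω ^ 2) (fun ω => B₃ ω ^ 2) P :=
      hAB₃.comp (measurable_id.pow_const 2) (measurable_id.pow_const 2)
    have h : ∫ ω, A₃ ω ^ 2 * B₃ ω ^ 2 ∂P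
        = (∫ ω, A₃ ω ^ 2 ∂P) * ∫ ω, B₃ ω ^ 2 ∂P :=
      hind.integral_fun_mul_eq_mul_integral (hA₃m.pow_const 2).aestronglyMeasurable
        (hB₃m.pow_const 2).aestronglyMeasurable
    have heq : (fun ω => Z₃ ω ^ 2) = fun ω => A₃ ω ^ 2 * B₃ ω ^ 2 := by
      funext ω; rw [hZ₃]; simp only; ring
    rw [heq, h, hA₃sq, hB₃sq]
  have hZZ₁₂int : Integrable (fun ω => Z₁ ω * Z₂ ω) P := by
    have hgint : Integrable
        (fun ω => (a*(2 * |p₁| + |X ω|)) * (a*(2 * |p₂| + |X ω|))) P := by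
      have heq : (fun ω => (a*(2 * |p₁| + |X ω|)) * (a*(2 * |p₂| + |X ω|)))
          = fun ω => a^2 * (4 * |p₁| * |p₂|)
              + ((a^2*(2 * |p₁|) + a^2*(2 * |p₂|)) * |X ω| + a^2 * X ω^2) := by
        funext ω; rw [← sq_abs (X ω)]; ring
      have i1 : Integrable (fun ω => (a^2*(2 * |p₁|) + a^2*(2 * |p₂|)) * |X ω|) P :=
        hXabsint.const_mul _
      have i2 : Integrable (fun ω => a^2 * X ω^2) P := hXsqint.const_mul _
      have i3 : Integrable (fun ω => (a^2*(2 * |p₁|) + a^2*(2 * |p₂|)) * |X ω| + a^2 * X ω^2) P :=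
        i1.add i2
      rw [heq]
      exact (integrable_const _).add i3
    refine hgint.mono' (hZ₁m.mul hZ₂m).aestronglyMeasurable ?_
    filter_upwards [hZbd₁, hZbd₂] with ω h1 h2
    have he : ‖Z₁ ω * Z₂ ω‖ = |Z₁ ω| * |Z₂ ω| := by
      rw [Real.norm_eq_abs, abs_mul]
    rw [he]
    exact mul_le_mul h1 h2 (abs_nonneg _) (by positivity)
  have hZZ₁₂val : ∫ ω, Z₁ ω * Z₂ ω ∂P = 0 := by
    have h : ∫ ω, A₁ ω * (A₂ ω * (B₁ ω * B₂ ω)) ∂P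
        = (∫ ω, A₁ ω ∂P) * ∫ ω, A₂ ω * (B₁ ω * B₂ ω) ∂P :=
      hcross₁₂.integral_fun_mul_eq_mul_integral hA₁m.aestronglyMeasurable
        (hA₂m.mul (hB₁m.mul hB₂m)).aestronglyMeasurable
    have heq : (fun ω => Z₁ ω * Z₂ ω)
        = fun ω => A₁ ω * (A₂ ω * (B₁ ω * B₂ ω)) := by
      funext ω; rw [hZ₁, hZ₂]; simp only; ring
    rw [heq, h, hA₁mean, zero_mul]
  have hZZ₁₃int : Integrable (fun ω => Z₁ ω * Z₃ ω) P := by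
    have hgint : Integrable
        (fun ω => (a*(2 * |p₁| + |X ω|)) * (a*(2 * |p₃| + |X ω|))) P := by
      have heq : (fun ω => (a*(2 * |p₁| + |X ω|)) * (a*(2 * |p₃| + |X ω|)))
          = fun ω => a^2 * (4 * |p₁| * |p₃|)
              + ((a^2*(2 * |p₁|) + a^2*(2 * |p₃|)) * |X ω| + a^2 * X ω^2) := by
        funext ω; rw [← sq_abs (X ω)]; ring
      have i1 : Integrable (fun ω => (a^2*(2 * |p₁|) + a^2*(2 * |p₃|)) * |X ω|) P :=
        hXabsint.const_mul _
      have i2 : Integrable (fun ω => a^2 * X ω^2) P := hXsqint.const_mul _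
      have i3 : Integrable (fun ω => (a^2*(2 * |p₁|) + a^2*(2 * |p₃|)) * |X ω| + a^2 * X ω^2) P :=
        i1.add i2
      rw [heq]
      exact (integrable_const _).add i3
    refine hgint.mono' (hZ₁m.mul hZ₃m).aestronglyMeasurable ?_
    filter_upwards [hZbd₁, hZbd₃] with ω h1 h2
    have he : ‖Z₁ ω * Z₃ ω‖ = |Z₁ ω| * |Z₃ ω| := by
      rw [Real.norm_eq_abs, abs_mul]
    rw [he]
    exact mul_le_mul h1 h2 (abs_nonneg _) (by positivity)
  have hZZ₁₃val : ∫ ω, Z₁ ω * Z₃ ω ∂P = 0 := by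
    have h : ∫ ω, A₁ ω * (A₃ ω * (B₁ ω * B₃ ω)) ∂P
        = (∫ ω, A₁ ω ∂P) * ∫ ω, A₃ ω * (B₁ ω * B₃ ω) ∂P :=
      hcross₁₃.integral_fun_mul_eq_mul_integral hA₁m.aestronglyMeasurable
        (hA₃m.mul (hB₁m.mul hB₃m)).aestronglyMeasurable
    have heq : (fun ω => Z₁ ω * Z₃ ω)
        = fun ω => A₁ ω * (A₃ ω * (B₁ ω * B₃ ω)) := by
      funext ω; rw [hZ₁, hZ₃]; simp only; ring
    rw [heq, h, hA₁mean, zero_mul]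
  have hZZ₂₃int : Integrable (fun ω => Z₂ ω * Z₃ ω) P := by
    have hgint : Integrable
        (fun ω => (a*(2 * |p₂| + |X ω|)) * (a*(2 * |p₃| + |X ω|))) P := by
      have heq : (fun ω => (a*(2 * |p₂| + |X ω|)) * (a*(2 * |p₃| + |X ω|)))
          = fun ω => a^2 * (4 * |p₂| * |p₃|)
              + ((a^2*(2 * |p₂|) + a^2*(2 * |p₃|)) * |X ω| + a^2 * X ω^2) := by
        funext ω; rw [← sq_abs (X ω)]; ring
      have i1 : Integrable (fun ω => (a^2*(2 * |p₂|) + a^2*(2 * |p₃|)) * |X ω|) P :=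
        hXabsint.const_mul _
      have i2 : Integrable (fun ω => a^2 * X ω^2) P := hXsqint.const_mul _
      have i3 : Integrable (fun ω => (a^2*(2 * |p₂|) + a^2*(2 * |p₃|)) * |X ω| + a^2 * X ω^2) P :=
        i1.add i2
      rw [heq]
      exact (integrable_const _).add i3
    refine hgint.mono' (hZ₂m.mul hZ₃m).aestronglyMeasurable ?_
    filter_upwards [hZbd₂, hZbd₃] with ω h1 h2
    have he : ‖Z₂ ω * Z₃ ω‖ = |Z₂ ω| * |Z₃ ω| := by
      rw [Real.norm_eq_abs, abs_mul]
    rw [he]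
    exact mul_le_mul h1 h2 (abs_nonneg _) (by positivity)
  have hZZ₂₃val : ∫ ω, Z₂ ω * Z₃ ω ∂P = 0 := by
    have h : ∫ ω, A₂ ω * (A₃ ω * (B₂ ω * B₃ ω)) ∂P
        = (∫ ω, A₂ ω ∂P) * ∫ ω, A₃ ω * (B₂ ω * B₃ ω) ∂P :=
      hcross₂₃.integral_fun_mul_eq_mul_integral hA₂m.aestronglyMeasurable
        (hA₃m.mul (hB₂m.mul hB₃m)).aestronglyMeasurable
    have heq : (fun ω => Z₂ ω * Z₃ ω)
        = fun ω => A₂ ω * (A₃ ω * (B₂ ω * B₃ ω)) := by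
      funext ω; rw [hZ₂, hZ₃]; simp only; ring
    rw [heq, h, hA₂mean, zero_mul]
  -- the centered update W
  have hWmem : MemLp W 2 P := (hZ₁mem.add hZ₂mem).add hZ₃mem
  have hWint : Integrable W P := hWmem.integrable one_le_two
  have hWsqint : Integrable (fun ω => W ω ^ 2) P := hWmem.integrable_sq
  have hWmean : ∫ ω, W ω ∂P = 0 := by
    have heq : W = fun ω => Z₁ ω + Z₂ ω + Z₃ ω := hW
    have i12 : Integrable (fun ω => Z₁ ω + Z₂ ω) P := hZ₁int.add hZ₂int
    rw [heq, integral_add i12 hZ₃int, integral_add hZ₁int hZ₂int,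
      hZ₁mean, hZ₂mean, hZ₃mean]
    ring
  have hWsq : ∫ ω, W ω ^ 2 ∂P
      = a^2/3 * (4/3*p₁^2 - 2*p₁*c + (variance X P + c^2))
        + a^2/3 * (4/3*p₂^2 - 2*p₂*c + (variance X P + c^2))
        + a^2/3 * (4/3*p₃^2 - 2*p₃*c + (variance X P + c^2)) := by
    have heq : (fun ω => W ω ^ 2)
        = fun ω => (Z₁ ω ^ 2 + Z₂ ω ^ 2 + Z₃ ω ^ 2)
            + (2*(Z₁ ω * Z₂ ω) + 2*(Z₁ ω * Z₃ ω) + 2*(Z₂ ω * Z₃ ω)) := by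
      funext ω; simp only [hW]; ring
    have i1 : Integrable (fun ω => Z₁ ω ^ 2) P := hZ₁mem.integrable_sq
    have i2 : Integrable (fun ω => Z₂ ω ^ 2) P := hZ₂mem.integrable_sq
    have i3 : Integrable (fun ω => Z₃ ω ^ 2) P := hZ₃mem.integrable_sq
    have i12 : Integrable (fun ω => Z₁ ω ^ 2 + Z₂ ω ^ 2) P := i1.add i2
    have iS : Integrable (fun ω => Z₁ ω ^ 2 + Z₂ ω ^ 2 + Z₃ ω ^ 2) P := i12.add i3
    have c12 : Integrable (fun ω => 2*(Z₁ ω * Z₂ ω)) P := hZZ₁₂int.const_mul 2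
    have c13 : Integrable (fun ω => 2*(Z₁ ω * Z₃ ω)) P := hZZ₁₃int.const_mul 2
    have c23 : Integrable (fun ω => 2*(Z₂ ω * Z₃ ω)) P := hZZ₂₃int.const_mul 2
    have cA : Integrable (fun ω => 2*(Z₁ ω * Z₂ ω) + 2*(Z₁ ω * Z₃ ω)) P := c12.add c13
    have cS : Integrable (fun ω => 2*(Z₁ ω * Z₂ ω) + 2*(Z₁ ω * Z₃ ω) + 2*(Z₂ ω * Z₃ ω)) P :=
      cA.add c23
    rw [heq, integral_add iS cS, integral_add i12 i3, integral_add i1 i2,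
      integral_add cA c23, integral_add c12 c13,
      integral_const_mul _ _, integral_const_mul _ _, integral_const_mul _ _,
      hZ₁sq, hZ₂sq, hZ₃sq, hZZ₁₂val, hZZ₁₃val, hZZ₂₃val]
    ring
  -- rewrite the update in terms of W
  have hYeq : (fun ω => (1/3 : ℝ) *
        ((p₁ + A₁ ω * |C₁ ω * p₁ - X ω|) + (p₂ + A₂ ω * |C₂ ω * p₂ - X ω|)
          + (p₃ + A₃ ω * |C₃ ω * p₃ - X ω|)))
      = fun ω => c + (1/3 : ℝ) * W ω := by
    funext ω
    simp only [hW, hZ₁, hZ₂, hZ₃, hB₁, hB₂, hB₃]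
    rw [hc]; ring
  have hYmem : MemLp (fun ω => c + (1/3 : ℝ) * W ω) 2 P :=
    (memLp_const c).add (hWmem.const_mul (1/3))
  constructor
  · rw [hYeq]; exact hYmem
  · rw [hYeq, variance_eq_sub hYmem]
    have h1 : ∫ ω, (c + (1/3 : ℝ) * W ω) ∂P = c := by
      rw [integral_add (integrable_const c) (hWint.const_mul _),
        integral_const_mul _ _, hWmean, integral_const]
      simp
    have h2 : ∫ ω, (c + (1/3 : ℝ) * W ω) ^ 2 ∂P
        = c^2 + (1/9) * ∫ ω, W ω ^ 2 ∂P := by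
      have heq : (fun ω => (c + (1/3 : ℝ) * W ω) ^ 2)
          = fun ω => c^2 + ((2*c*(1/3))*W ω + (1/9)*W ω ^ 2) := by
        funext ω; ring
      have iA : Integrable (fun ω => (2*c*(1/3))*W ω) P := hWint.const_mul _
      have iB : Integrable (fun ω => (1/9)*W ω ^ 2) P := hWsqint.const_mul _
      have iAB : Integrable (fun ω => (2*c*(1/3))*W ω + (1/9)*W ω ^ 2) P := iA.add iB
      rw [heq, integral_add (integrable_const _) iAB, integral_add iA iB,
        integral_const_mul _ _, integral_const_mul _ _, hWmean, integral_const]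
      simp
    have hgoal : ∫ ω, ((fun ω => c + (1/3 : ℝ) * W ω) ^ 2) ω ∂P
        = ∫ ω, (c + (1/3 : ℝ) * W ω) ^ 2 ∂P := by
      simp [Pi.pow_apply]
    rw [hgoal, h2, h1, hWsq, hp₀, hc]
    ring
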